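/- Let M ⊆ X be a proper cone in a real normed space with −u ∈ int M, q the gauge of M + u, Rx = q(x)u and Q = I − R. Then both Q and R are subadditive: R(x+y) − Rx − Ry ∈ −R(X) and Qx + Qy − Q(x+y) ∈ M for all x, y ∈ X. -/

import Mathlib

theorem stmt_18 {X : Type*} [NormedAddCommGroup X] [NormedSpace ℝ X]
    (M : Set X) (u : X)
    (hconv : Convex ℝ M)
    (hsmul : ∀ t : ℝ, 0 ≤ t → ∀ x ∈ M, t • x ∈ M)
    (hpointed : M ∩ -M = {0})
    (hclosed : IsClosed M)
    (hint : -u ∈ interior M)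
    (q : X → ℝ) (hq : ∀ x, q x = gauge ((fun k => k + u) '' M) x)
    (R Q : X → X) (hRdef : ∀ x, R x = q x • u) (hQdef : ∀ x, Q x = x - R x) :
    (∀ x y, R (x + y) - R x - R y ∈ -Set.range R) ∧
    (∀ x y, Q x + Q y - Q (x + y) ∈ M) := by
  set s : Set X := (fun k => k + u) '' M with hs
  -- 0 ∈ interior s
  have h0 : (0 : X) ∈ interior s := by
    have hopen : IsOpenMap (fun k : X => k + u) := isOpenMap_add_right u
    have : (fun k : X => k + u) '' interior M ⊆ interior s :=
      hopen.image_interior_subset M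
    exact this ⟨-u, hint, by simp⟩
  have habs : Absorbent ℝ s :=
    absorbent_nhds_zero (mem_interior_iff_mem_nhds.mp h0)
  have hconvs : Convex ℝ s := by
    have := hconv.translate u
    convert this using 2 with x
    simp [add_comm]
  -- subadditivity of q
  have hsub : ∀ x y : X, q (x + y) ≤ q x + q y := by
    intro x y
    rw [hq, hq, hq]
    exact gauge_add_le hconvs habs x y
  have hqnonneg : ∀ x : X, 0 ≤ q x := fun x => by rw [hq]; exact gauge_nonneg x
  have hqsmul : ∀ (t : ℝ), 0 ≤ t → ∀ x : X, q (t • x) = t * q x := by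
    intro t ht x
    rw [hq, hq, gauge_smul_of_nonneg ht, smul_eq_mul]
  have hq0 : q 0 = 0 := by rw [hq]; exact gauge_zero
  have key : ∀ x y : X, R (x + y) - R x - R y = (q (x + y) - q x - q y) • u := by
    intro x y
    rw [hRdef, hRdef, hRdef, sub_smul, sub_smul]
  have h0M : (0 : X) ∈ M := by
    have : (0 : X) ∈ M ∩ -M := by rw [hpointed]; rfl
    exact this.1
  constructor
  · intro x y
    rw [key]
    by_cases hu : u = 0
    · rw [Set.mem_neg]
      refine ⟨0, ?_⟩
      rw [hRdef, hu]
      simp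
    · -- q u > 0
      have hqu : 0 < q u := by
        rcases lt_or_eq_of_le (hqnonneg u) with h | h
        · exact h
        · exfalso
          have : gauge s u < 1 := by rw [← hq, ← h]; norm_num
          obtain ⟨b, hb0, hb1, hbu⟩ := exists_lt_of_gauge_lt habs this
          obtain ⟨w, ⟨m, hm, rfl⟩, hw⟩ := hbu
          -- u = b • (m + u), so m = ((1-b)/b) • u
          have hm' : m = ((1 - b) / b) • u := by
            have hbmu : b • (m + u) = u := hw
            rw [smul_add] at hbmu
            have : b • m = (1 - b) • u := by
              rw [sub_smul, one_smul]
              exact eq_sub_of_add_eq hbmu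
            calc m = b⁻¹ • (b • m) := by rw [smul_smul, inv_mul_cancel₀ hb0.ne', one_smul]
            _ = b⁻¹ • ((1 - b) • u) := by rw [this]
            _ = ((1 - b) / b) • u := by rw [smul_smul, div_eq_inv_mul]
          have huM : u ∈ M := by
            have h1b : 0 < 1 - b := by linarith
            have := hsmul (b / (1 - b)) (by positivity) m hm
            rwa [hm', smul_smul, div_mul_div_comm, mul_comm,
              div_self (by positivity), one_smul] at this
          have hunegM : u ∈ M ∩ -M := ⟨huM, by rw [Set.mem_neg]; exact interior_subset hint⟩
          rw [hpointed, Set.mem_singleton_iff] at hunegM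
          exact hu hunegM
      set c : ℝ := q x + q y - q (x + y) with hc
      have hc0 : 0 ≤ c := by have := hsub x y; linarith
      rw [Set.mem_neg]
      refine ⟨(c / q u) • u, ?_⟩
      rw [hRdef, hqsmul _ (by positivity), div_mul_cancel₀ _ hqu.ne']
      rw [show -((q (x + y) - q x - q y) • u) = c • u by rw [← neg_smul, hc]; ring_nf]
  · intro x y
    have e : Q x + Q y - Q (x + y) = R (x + y) - R x - R y := by
      rw [hQdef, hQdef, hQdef]; abel
    have : Q x + Q y - Q (x + y) = (q x + q y - q (x + y)) • (-u) := by
      rw [e, key x y]; module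
    rw [this]
    exact hsmul _ (by have := hsub x y; linarith) _ (interior_subset hint)
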